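/- Let S₀, S ⊂ {1,…,n} be finite sets, p_n = |S₀|, and let r_n > 0 satisfy r_n² ≥ p_n. Then (v_{|S∩S₀|}/v_{|S₀|}) · r_n^{−|S₀∖S|} ≤ exp(C·|S₀|) for a universal constant C > 0, where v_k is the volume of the k-dimensional unit Euclidean ball (v_0 = 1). -/

import Mathlib

open Finset Real

lemma gamma_le_mul_rpow {x y : ℝ} (hx : 1 ≤ x) (hxy : x < y) :
    Real.Gamma y ≤ Real.Gamma x * y ^ (y - x) := by
  have hx0 : (0:ℝ) < x := lt_of_lt_of_le one_pos hx
  have hy0 : (0:ℝ) < y := lt_trans hx0 hxy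
  have hslope := Real.convexOn_log_Gamma.slope_mono_adjacent
    (x := x) (y := y) (z := y + 1) (Set.mem_Ioi.mpr hx0)
    (Set.mem_Ioi.mpr (by linarith)) hxy (by linarith)
  have hΓy : 0 < Real.Gamma y := Real.Gamma_pos_of_pos hy0
  have hΓx : 0 < Real.Gamma x := Real.Gamma_pos_of_pos hx0
  have hadd : Real.Gamma (y + 1) = y * Real.Gamma y := Real.Gamma_add_one (ne_of_gt hy0)
  simp only [Function.comp] at hslope
  rw [hadd, Real.log_mul (ne_of_gt hy0) (ne_of_gt hΓy)] at hslope
  have h1 : Real.log (Real.Gamma y) ≤ Real.log (Real.Gamma x) + (y - x) * Real.log y := by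
    have hyx : 0 < y - x := by linarith
    have := (div_le_div_iff₀ hyx one_pos).mp (by simpa using hslope)
    nlinarith [this]
  calc Real.Gamma y = Real.exp (Real.log (Real.Gamma y)) := (Real.exp_log hΓy).symm
    _ ≤ Real.exp (Real.log (Real.Gamma x) + (y - x) * Real.log y) := Real.exp_le_exp.mpr h1
    _ = Real.Gamma x * y ^ (y - x) := by
        rw [Real.exp_add, Real.exp_log hΓx, Real.rpow_def_of_pos hy0, mul_comm (y-x)]

/-- The volume of the `k`-dimensional Euclidean unit ball: `π^{k/2}/Γ(k/2+1)`. -/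
noncomputable def unitBallVolume (k : ℕ) : ℝ :=
  Real.pi ^ ((k : ℝ) / 2) / Real.Gamma ((k : ℝ) / 2 + 1)

lemma unitBallVolume_pos (k : ℕ) : 0 < unitBallVolume k := by
  unfold unitBallVolume
  exact div_pos (Real.rpow_pos_of_pos Real.pi_pos _)
    (Real.Gamma_pos_of_pos (by positivity))

theorem volume_ratio_bound :
    ∃ C : ℝ, 0 < C ∧ ∀ (n : ℕ) (S₀ S : Finset (Fin n)) (r : ℝ), 0 < r →
      (S₀.card : ℝ) ≤ r ^ 2 →
      unitBallVolume (S ∩ S₀).card / unitBallVolume S₀.card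
          * r ^ (-((S₀ \ S).card : ℝ)) ≤
        Real.exp (C * S₀.card) := by
  refine ⟨1, one_pos, fun n S₀ S r hr hr2 => ?_⟩
  have hone : (1:ℝ) ≤ Real.exp (1 * S₀.card) := by
    rw [one_mul]; exact Real.one_le_exp (by positivity)
  refine le_trans ?_ hone
  -- notation
  set a := (S ∩ S₀).card with ha
  set p := S₀.card with hp
  set b := (S₀ \ S).card with hb
  have hab : a + b = p := by
    rw [ha, hb, hp, Finset.inter_comm]
    exact Finset.card_inter_add_card_sdiff S₀ S
  rcases Nat.eq_zero_or_pos b with hb0 | hb1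
  · -- b = 0 : the expression is 1
    have hap : a = p := by omega
    rw [hap, hb0]
    simp [div_self (ne_of_gt (unitBallVolume_pos p))]
  · -- b ≥ 1
    set A : ℝ := (a : ℝ)
    set B : ℝ := (b : ℝ)
    set P : ℝ := (p : ℝ)
    have hAB : A + B = P := by simp only [A, B, P, ← Nat.cast_add, hab]
    have hB1 : (1:ℝ) ≤ B := Nat.one_le_cast.mpr hb1
    have hA0 : (0:ℝ) ≤ A := Nat.cast_nonneg a
    have hP1 : (1:ℝ) ≤ P := by linarith
    have hGA : 0 < Real.Gamma (A / 2 + 1) := Real.Gamma_pos_of_pos (by positivity)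
    have hGP : 0 < Real.Gamma (P / 2 + 1) := Real.Gamma_pos_of_pos (by positivity)
    have hpiP : 0 < Real.pi ^ (P / 2) := Real.rpow_pos_of_pos Real.pi_pos _
    -- key Gamma bound
    have hgamma : Real.Gamma (P / 2 + 1) ≤
        Real.Gamma (A / 2 + 1) * (P / 2 + 1) ^ (B / 2) := by
      have hAlt : A / 2 + 1 < P / 2 + 1 := by
        have : A < P := by nlinarith
        linarith
      have := gamma_le_mul_rpow (x := A / 2 + 1) (y := P / 2 + 1)
        (by linarith) hAlt
      have heq : (P / 2 + 1) - (A / 2 + 1) = B / 2 := by linarith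
      rwa [heq] at this
    -- r ^ (-B) ≤ P ^ (-(B/2))
    have hrB : r ^ (-B) ≤ P ^ (-(B / 2)) := by
      have h1 : r ^ (-B) = (r ^ 2) ^ (-(B / 2)) := by
        rw [← Real.rpow_natCast r 2, ← Real.rpow_mul hr.le]
        norm_num
        ring_nf
      rw [h1]
      exact Real.rpow_le_rpow_of_nonpos (by linarith) hr2 (by linarith)
    -- the main chain
    have hLHS : unitBallVolume a / unitBallVolume p =
        Real.pi ^ (-(B / 2)) * (Real.Gamma (P / 2 + 1) / Real.Gamma (A / 2 + 1)) := by
      unfold unitBallVolume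
      rw [div_div_div_comm, ← Real.rpow_sub Real.pi_pos]
      have : A / 2 - P / 2 = -(B / 2) := by linarith
      rw [this]
      field_simp
      exact mul_comm _ _
    rw [hLHS]
    have hrBnn : (0:ℝ) ≤ r ^ (-B) := Real.rpow_nonneg hr.le _
    have step1 : Real.pi ^ (-(B / 2)) * (Real.Gamma (P / 2 + 1) / Real.Gamma (A / 2 + 1))
          * r ^ (-B)
        ≤ Real.pi ^ (-(B / 2)) * (P / 2 + 1) ^ (B / 2) * P ^ (-(B / 2)) := by
      have hdiv : Real.Gamma (P / 2 + 1) / Real.Gamma (A / 2 + 1) ≤ (P / 2 + 1) ^ (B / 2) :=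
        (div_le_iff₀ hGA).mpr (by rw [mul_comm]; exact hgamma)
      have hpin : (0:ℝ) ≤ Real.pi ^ (-(B / 2)) := (Real.rpow_pos_of_pos Real.pi_pos _).le
      have hdn : (0:ℝ) ≤ Real.Gamma (P / 2 + 1) / Real.Gamma (A / 2 + 1) :=
        div_nonneg hGP.le hGA.le
      exact mul_le_mul (mul_le_mul_of_nonneg_left hdiv hpin) hrB hrBnn
        (by positivity)
    refine step1.trans ?_
    have step2 : (P / 2 + 1 : ℝ) ^ (B / 2) ≤ (Real.pi * P) ^ (B / 2) := by
      apply Real.rpow_le_rpow (by positivity) ?_ (by positivity)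
      nlinarith [Real.pi_gt_three]
    calc Real.pi ^ (-(B / 2)) * (P / 2 + 1) ^ (B / 2) * P ^ (-(B / 2))
        ≤ Real.pi ^ (-(B / 2)) * (Real.pi * P) ^ (B / 2) * P ^ (-(B / 2)) := by
          have hpin : (0:ℝ) ≤ Real.pi ^ (-(B / 2)) := by positivity
          have hPn : (0:ℝ) ≤ P ^ (-(B / 2)) := by positivity
          exact mul_le_mul_of_nonneg_right (mul_le_mul_of_nonneg_left step2 hpin) hPn
      _ = 1 := by
          rw [Real.mul_rpow Real.pi_pos.le (by linarith : (0:ℝ) ≤ P)]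
          have h1 : Real.pi ^ (-(B / 2)) * Real.pi ^ (B / 2 : ℝ) = 1 := by
            rw [← Real.rpow_add Real.pi_pos]; simp
          have h2 : P ^ (B / 2 : ℝ) * P ^ (-(B / 2)) = 1 := by
            rw [← Real.rpow_add (by linarith : (0:ℝ) < P)]; simp
          calc Real.pi ^ (-(B / 2)) * (Real.pi ^ (B / 2 : ℝ) * P ^ (B / 2 : ℝ)) * P ^ (-(B / 2))
              = (Real.pi ^ (-(B / 2)) * Real.pi ^ (B / 2 : ℝ))
                * (P ^ (B / 2 : ℝ) * P ^ (-(B / 2))) := by ring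
            _ = 1 := by rw [h1, h2, mul_one]
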